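/- Let p be a prime, F = F_{p^m}, θ(x) = x^{p^l} a nontrivial field automorphism of F (i.e., gcd(l,m) < m). For a, b ∈ F*, the images of the maps f_{a,θ}(x) = a·x^θ − x·a^θ and f_{b,θ}(x) = b·x^θ − x·b^θ coincide if and only if (a·b^{-1})^{θ²} = a·b^{-1}, i.e., a·b^{-1} lies in the fixed field of θ². -/

import Mathlib

lemma aux_charP (p m : ℕ) (hp : p.Prime) (F : Type) [Field F] [Fintype F]
    (hF : Fintype.card F = p ^ m) : CharP F p := by
  haveI h := ringChar.charP F
  have hr : (ringChar F).Prime := CharP.char_is_prime F _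
  obtain ⟨n, -, hcard⟩ := FiniteField.card F (ringChar F)
  have hdvd : ringChar F ∣ p ^ m := by
    rw [← hF, hcard]; exact dvd_pow_self _ (by exact_mod_cast n.pos.ne')
  have : ringChar F = p :=
    (Nat.prime_dvd_prime_iff_eq hr hp).mp (hr.dvd_of_dvd_pow hdvd)
  rwa [this] at h

/-- For nonzero `a, b`, `Im(f_{a,θ}) = Im(f_{b,θ})` iff `a·b⁻¹` is fixed by `θ²`. -/
theorem stmt_1 (p m l : ℕ) (hp : p.Prime) (hm : 0 < m) (hl : 0 < l)
    (hlm : Nat.gcd l m < m)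
    (F : Type) [Field F] [Fintype F] (hF : Fintype.card F = p ^ m)
    (a b : F) (ha : a ≠ 0) (hb : b ≠ 0) :
    Set.range (fun x : F => a * x ^ p ^ l - x * a ^ p ^ l) =
      Set.range (fun x : F => b * x ^ p ^ l - x * b ^ p ^ l) ↔
    (a * b⁻¹) ^ p ^ (2 * l) = a * b⁻¹ := by
  classical
  haveI hchar : CharP F p := aux_charP p m hp F hF
  haveI : Fact p.Prime := ⟨hp⟩
  set q := p ^ l with hqdef
  have hq1 : 1 ≤ q := Nat.one_le_pow _ _ hp.pos
  have hq0 : q ≠ 0 := by omega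
  have hqq : p ^ (2 * l) = q * q := by rw [two_mul, pow_add]
  have hc0 : a * b⁻¹ ≠ 0 := mul_ne_zero ha (inv_ne_zero hb)
  have hadd : ∀ x y : F, (x + y) ^ q = x ^ q + y ^ q := by
    intro x y; rw [hqdef]; exact add_pow_char_pow x y p l
  have hneg : ∀ x : F, (-x) ^ q = -(x ^ q) := by
    intro x
    rw [neg_eq_neg_one_mul, mul_pow, hqdef, neg_one_pow_char_pow, neg_one_mul, ← hqdef]
  rw [hqq]
  constructor
  · -- hard direction
    intro hrange
    set c := a * b⁻¹ with hcdef
    have hcb : c * b = a := by rw [hcdef]; field_simp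
    set f : F → F := fun x => b * x ^ q - x * b ^ q with hfdef
    set K : Set F := Set.range f with hKdef
    have hK0 : (0 : F) ∈ K := ⟨0, by simp [hfdef, zero_pow hq0]⟩
    have hKadd : ∀ y ∈ K, ∀ z ∈ K, y + z ∈ K := by
      rintro _ ⟨y, rfl⟩ _ ⟨z, rfl⟩
      exact ⟨y + z, by simp only [hfdef]; rw [hadd]; ring⟩
    have hKneg : ∀ y ∈ K, -y ∈ K := by
      rintro _ ⟨y, rfl⟩
      exact ⟨-y, by simp only [hfdef]; rw [hneg]; ring⟩
    have hKfin : K.Finite := Set.toFinite K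
    have hmulK : ∀ u : F, u ≠ 0 → (∀ y ∈ K, u * y ∈ K) → ∀ y ∈ K, u⁻¹ * y ∈ K := by
      intro u hu hmem
      have himg : (fun y => u * y) '' K = K := by
        apply Set.eq_of_subset_of_ncard_le ?_ ?_ hKfin
        · rintro _ ⟨y, hy, rfl⟩; exact hmem y hy
        · rw [Set.ncard_image_of_injective K (mul_right_injective₀ hu)]
      intro y hy
      rw [← himg] at hy
      obtain ⟨z, hz, hzz⟩ := hy
      rw [← hzz, ← mul_assoc, inv_mul_cancel₀ hu, one_mul]
      exact hz
    -- the stabilizer subfield M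
    let M : Subfield F :=
      { carrier := {u : F | ∀ y ∈ K, u * y ∈ K}
        mul_mem' := by
          intro u v hu hv y hy
          rw [mul_assoc]; exact hu _ (hv y hy)
        one_mem' := by intro y hy; rwa [one_mul]
        add_mem' := by
          intro u v hu hv y hy
          rw [add_mul]; exact hKadd _ (hu y hy) _ (hv y hy)
        zero_mem' := by intro y hy; rw [zero_mul]; exact hK0
        neg_mem' := by intro u hu y hy; rw [neg_mul]; exact hKneg _ (hu y hy)
        inv_mem' := by
          intro u hu
          rcases eq_or_ne u 0 with rfl | h0
          · rw [inv_zero]; exact hu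
          · exact hmulK u h0 hu }
    haveI : Fintype M := Fintype.ofFinite M
    haveI : CharP M p := (M.subtype.charP_iff M.subtype.injective p).mpr hchar
    obtain ⟨e, -, hMcard⟩ := FiniteField.card M p
    -- e ∣ m
    have hFcard : Fintype.card F = Fintype.card M ^ Module.finrank M F :=
      Module.card_eq_pow_finrank
    have hedvdm : (e : ℕ) ∣ m := by
      refine ⟨Module.finrank M F, ?_⟩
      have hpow : p ^ m = p ^ ((e : ℕ) * Module.finrank M F) := by
        rw [← hF, hFcard, hMcard, ← pow_mul]
      exact Nat.pow_right_injective hp.two_le hpow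
    -- the fixed subfield Fx
    let Fx : Subfield F :=
      { carrier := {w : F | w ^ q = w}
        mul_mem' := by
          intro u v hu hv
          simp only [Set.mem_setOf_eq] at *
          rw [mul_pow, hu, hv]
        one_mem' := by simp
        add_mem' := by
          intro u v hu hv
          simp only [Set.mem_setOf_eq] at *
          rw [hadd, hu, hv]
        zero_mem' := by simp [zero_pow hq0]
        neg_mem' := by
          intro u hu
          simp only [Set.mem_setOf_eq] at *
          rw [hneg, hu]
        inv_mem' := by
          intro u hu
          simp only [Set.mem_setOf_eq] at *
          rw [inv_pow, hu] }
    haveI : Fintype Fx := Fintype.ofFinite Fx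
    haveI : CharP Fx p := (Fx.subtype.charP_iff Fx.subtype.injective p).mpr hchar
    obtain ⟨j, -, hFxcard⟩ := FiniteField.card Fx p
    -- p^j - 1 ∣ q - 1
    have hunits : ∀ g : Fxˣ, g ^ (q - 1) = 1 := by
      intro g
      have hg : (g : Fx) ^ q = (g : Fx) := by
        have h2 : ((g : Fx) : F) ^ q = ((g : Fx) : F) := (g : Fx).2
        ext
        push_cast
        exact h2
      have hgq : g ^ q = g := Units.ext (by rw [Units.val_pow_eq_pow_val, hg])
      have h2 : g ^ (q - 1) * g = 1 * g := by
        rw [← pow_succ, Nat.sub_add_cancel hq1, hgq, one_mul]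
      exact mul_right_cancel h2
    have hdvd1 : p ^ (j : ℕ) - 1 ∣ q - 1 := by
      have h1 : Monoid.exponent Fxˣ ∣ q - 1 :=
        Monoid.exponent_dvd_of_forall_pow_eq_one hunits
      have h2 : Monoid.exponent Fxˣ = Nat.card Fxˣ := IsCyclic.exponent_eq_card
      rw [Nat.card_units, Nat.card_eq_fintype_card, hFxcard] at h2
      rwa [← h2]
    -- the additive hom B with range K
    let B : F →+ F :=
      { toFun := f
        map_zero' := by simp [hfdef, zero_pow hq0]
        map_add' := by
          intro x y
          simp only [hfdef]
          rw [hadd]; ring }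
    -- kernel of B has the same cardinality as Fx
    have hkerFx : Nat.card B.ker = p ^ (j : ℕ) := by
      rw [← hFxcard, ← Nat.card_eq_fintype_card]
      apply Nat.card_congr
      have hker : ∀ x : F, x ∈ B.ker ↔ b * x ^ q = x * b ^ q := by
        intro x
        rw [AddMonoidHom.mem_ker]
        constructor
        · intro h; have := sub_eq_zero.mp h; exact this
        · intro h; simp only [B, AddMonoidHom.coe_mk, ZeroHom.coe_mk, hfdef]
          rw [h]; ring
      refine ⟨fun x => ⟨b⁻¹ * x.1, ?_⟩, fun w => ⟨b * w.1, ?_⟩, ?_, ?_⟩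
      · have hx := (hker x.1).mp x.2
        show (b⁻¹ * x.1) ^ q = b⁻¹ * x.1
        rw [mul_pow, inv_pow]
        field_simp
        linear_combination hx
      · have hw : (w : F) ^ q = w := w.2
        rw [hker]
        rw [mul_pow, hw]
        ring
      · intro x
        ext
        simp
        field_simp
      · intro w
        ext
        simp
        field_simp
    -- first isomorphism theorem
    have hiso : Nat.card F = Nat.card B.range * Nat.card B.ker := by
      rw [AddSubgroup.card_eq_card_quotient_mul_card_addSubgroup B.ker]
      congr 1
      exact Nat.card_congr (QuotientAddGroup.quotientKerEquivRange B).toEquiv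
    have hcardF : Nat.card F = p ^ m := by rw [Nat.card_eq_fintype_card, hF]
    have hjm : (j : ℕ) ≤ m := by
      have : p ^ (j : ℕ) ∣ p ^ m := by
        rw [hcardF, hkerFx] at hiso
        exact ⟨Nat.card B.range, by rw [hiso]; ring⟩
      exact (Nat.pow_dvd_pow_iff_le_right hp.one_lt).mp this
    have hNR : Nat.card B.range = p ^ (m - (j : ℕ)) := by
      have hpj : (0 : ℕ) < p ^ (j : ℕ) := Nat.pow_pos hp.pos
      apply Nat.eq_of_mul_eq_mul_right hpj
      rw [← pow_add, Nat.sub_add_cancel hjm, ← hcardF, hiso, hkerFx]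
    -- K is a vector space over M
    let V : Submodule M F :=
      { carrier := K
        add_mem' := fun {x y} hx hy => hKadd _ hx _ hy
        zero_mem' := hK0
        smul_mem' := fun u y hy => u.2 y hy }
    haveI : Fintype V := Fintype.ofFinite V
    have hVcard : Fintype.card V = Fintype.card M ^ Module.finrank M V :=
      Module.card_eq_pow_finrank
    have hVR : Nat.card V = Nat.card B.range := by
      apply Nat.card_congr
      exact Equiv.setCongr rfl
    have hedvdmj : (e : ℕ) ∣ m - (j : ℕ) := by
      refine ⟨Module.finrank M V, ?_⟩
      have hpow : p ^ (m - (j : ℕ)) = p ^ ((e : ℕ) * Module.finrank M V) := by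
        rw [← hNR, ← hVR, Nat.card_eq_fintype_card, hVcard, hMcard, ← pow_mul]
      exact Nat.pow_right_injective hp.two_le hpow
    have hej : (e : ℕ) ∣ (j : ℕ) := by
      have h := Nat.dvd_sub hedvdm hedvdmj
      rwa [Nat.sub_sub_self hjm] at h
    have hedvd1 : p ^ (e : ℕ) - 1 ∣ q - 1 := by
      refine dvd_trans ?_ hdvd1
      obtain ⟨k, hk⟩ := hej
      have := Nat.sub_dvd_pow_sub_pow (p ^ (e : ℕ)) 1 k
      rwa [one_pow, ← pow_mul, ← hk] at this
    -- c^(q+1) ∈ M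
    have huM : c ^ (q + 1) ∈ M := by
      intro y hy
      obtain ⟨z, rfl⟩ := hy
      have hval : c ^ (q + 1) * f z = a * (c * z) ^ q - (c * z) * a ^ q := by
        simp only [hfdef]
        rw [← hcb, mul_pow c z, mul_pow c b]
        ring
      rw [hval]
      have hmem : a * (c * z) ^ q - (c * z) * a ^ q ∈
          Set.range (fun x : F => a * x ^ q - x * a ^ q) := ⟨c * z, rfl⟩
      rw [hrange] at hmem
      exact hmem
    -- conclude
    have hzM : (⟨c ^ (q + 1), huM⟩ : M) ≠ 0 := by
      intro h
      exact pow_ne_zero (q + 1) hc0 (congrArg Subtype.val h)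
    have hMone : (⟨c ^ (q + 1), huM⟩ : M) ^ (Fintype.card M - 1) = 1 :=
      FiniteField.pow_card_sub_one_eq_one _ hzM
    have hpow : (c ^ (q + 1)) ^ (p ^ (e : ℕ) - 1) = 1 := by
      have h := congrArg Subtype.val hMone
      push_cast at h
      rwa [hMcard] at h
    obtain ⟨k2, hk2⟩ := hedvd1
    have h1 : c ^ ((q + 1) * (q - 1)) = 1 := by
      rw [hk2, ← mul_assoc, pow_mul, pow_mul, hpow, one_pow]
    have hqq1 : (q + 1) * (q - 1) = q * q - 1 := by
      rcases Nat.exists_eq_add_of_le hq1 with ⟨t, ht⟩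
      rw [ht]
      have h1 : 1 + t - 1 = t := by omega
      have h2 : (1 + t) * (1 + t) = t * t + 2 * t + 1 := by ring
      rw [h1, h2, Nat.add_sub_cancel]
      ring
    have hqq2 : 1 ≤ q * q := Nat.one_le_iff_ne_zero.mpr (by positivity)
    calc c ^ (q * q) = c ^ (q * q - 1) * c := by
          rw [← pow_succ, Nat.sub_add_cancel hqq2]
      _ = c := by rw [← hqq1, h1, one_mul]
  · -- easy direction
    intro hfix
    have main : ∀ a b : F, a ≠ 0 → b ≠ 0 → (a * b⁻¹) ^ (q * q) = a * b⁻¹ →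
        Set.range (fun x : F => a * x ^ q - x * a ^ q) ⊆
          Set.range (fun x : F => b * x ^ q - x * b ^ q) := by
      clear hfix ha hb hc0 hF
      rintro a b ha hb hfix y ⟨x, rfl⟩
      refine ⟨(a * b⁻¹) ^ q * x, ?_⟩
      have hab : a * b⁻¹ * b = a := by field_simp
      show b * ((a * b⁻¹) ^ q * x) ^ q - (a * b⁻¹) ^ q * x * b ^ q
          = a * x ^ q - x * a ^ q
      calc b * ((a * b⁻¹) ^ q * x) ^ q - (a * b⁻¹) ^ q * x * b ^ q
          = a * b⁻¹ * b * x ^ q - x * (a * b⁻¹ * b) ^ q := by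
            rw [mul_pow ((a * b⁻¹) ^ q) x, ← pow_mul, hfix, mul_pow (a * b⁻¹) b]
            ring
        _ = a * x ^ q - x * a ^ q := by rw [hab]
    have hinv : (b * a⁻¹) ^ (q * q) = b * a⁻¹ := by
      have h : b * a⁻¹ = (a * b⁻¹)⁻¹ := by
        field_simp
      rw [h, inv_pow, hfix]
    exact le_antisymm (main a b ha hb hfix) (main b a hb ha hinv)
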